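/- Let Λ, Q, e, λ₀, g_λ, w(λ), f_λ, R_λ be as in the self-tuning network setting: g_λ convex differentiable with L_λ-Lipschitz gradient, λ₀(λ) > 0, w(λ) the unique minimizer of f_λ(w) = g_λ(w) + (λ₀(λ)/2)‖w‖². Suppose U* minimizes F(U) = E_{λ∼Q}[f_λ(U e(λ))] over ℝ^{k×q}, and U_t satisfies F(U_t) ≤ F(U*) + ε for ε ≥ 0. Let U_app be any matrix and Δ_app(λ) = U_app e(λ) − w(λ). Then E_{λ∼Q}[λ₀(λ)‖U_t e(λ) − w(λ)‖²] ≤ E_{λ∼Q}[(L_λ + λ₀(λ))‖Δ_app(λ)‖²] + 2ε. -/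

import Mathlib

open MeasureTheory

open scoped RealInnerProductSpace

section Aux

variable {E : Type*} [NormedAddCommGroup E] [InnerProductSpace ℝ E] [CompleteSpace E]

lemma hasGradientAt_half_norm_sq_aux (c : ℝ) (x : E) :
    HasGradientAt (fun y : E => c / 2 * ‖y‖ ^ 2) (c • x) x := by
  rw [hasGradientAt_iff_hasFDerivAt]
  have h1 : HasFDerivAt (fun y : E => ⟪y, y⟫)
      ((fderivInnerCLM ℝ (x, x)).comp ((ContinuousLinearMap.id ℝ E).prod
        (ContinuousLinearMap.id ℝ E))) x :=
    (hasFDerivAt_id x).inner ℝ (hasFDerivAt_id x)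
  have h2 := h1.const_mul (c / 2)
  have hfun : (fun y : E => c / 2 * ⟪y, y⟫) = fun y : E => c / 2 * ‖y‖ ^ 2 := by
    funext y; rw [real_inner_self_eq_norm_sq]
  rw [hfun] at h2
  convert h2 using 1
  · rfl
  ext y
  simp [InnerProductSpace.toDual_apply_apply, fderivInnerCLM_apply, real_inner_comm x y,
    real_inner_smul_left]
  ring

lemma line_hasDerivAt_aux {g : E → ℝ} {g' : E → E} (hgrad : ∀ x, HasGradientAt g (g' x) x)
    (x v : E) (s : ℝ) :
    HasDerivAt (fun t : ℝ => g (x + t • v)) ⟪g' (x + s • v), v⟫ s := by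
  have hline : HasDerivAt (fun t : ℝ => x + t • v) v s := by
    simpa using ((hasDerivAt_id s).smul_const v).const_add x
  have hg := (hasGradientAt_iff_hasFDerivAt.1 (hgrad (x + s • v)))
  simpa [InnerProductSpace.toDual_apply_apply, Function.comp_def] using hg.comp_hasDerivAt s hline

lemma descent_lemma_aux {g : E → ℝ} {g' : E → E} {Lc : ℝ}
    (hgrad : ∀ x, HasGradientAt g (g' x) x)
    (hlip : ∀ a b, ‖g' a - g' b‖ ≤ Lc * ‖a - b‖) (x y : E) :
    g y ≤ g x + ⟪g' x, y - x⟫ + Lc / 2 * ‖y - x‖ ^ 2 := by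
  set v := y - x with hv
  have hcont : Continuous g' := by
    refine (LipschitzWith.of_dist_le_mul (K := Real.toNNReal Lc) fun a b => ?_).continuous
    rw [dist_eq_norm, dist_eq_norm]
    exact (hlip a b).trans (mul_le_mul_of_nonneg_right (Real.le_coe_toNNReal Lc)
      (norm_nonneg _))
  have hψ : ∀ t ∈ Set.uIcc (0:ℝ) 1,
      HasDerivAt (fun t : ℝ => g (x + t • v)) ⟪g' (x + t • v), v⟫ t :=
    fun t _ => line_hasDerivAt_aux hgrad x v t
  have hcd : Continuous fun t : ℝ => ⟪g' (x + t • v), v⟫ := by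
    apply Continuous.inner (hcont.comp (by continuity)) continuous_const
  have hint : IntervalIntegrable (fun t : ℝ => ⟪g' (x + t • v), v⟫)
      MeasureTheory.volume 0 1 := hcd.intervalIntegrable 0 1
  have hftc := intervalIntegral.integral_eq_sub_of_hasDerivAt hψ hint
  have hub : ∀ t ∈ Set.uIcc (0:ℝ) 1,
      HasDerivAt (fun t : ℝ => ⟪g' x, v⟫ * t + Lc * ‖v‖ ^ 2 * (t ^ 2 / 2))
        (⟪g' x, v⟫ + Lc * ‖v‖ ^ 2 * t) t := by
    intro t _
    have h1 := (hasDerivAt_id t).const_mul ⟪g' x, v⟫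
    have h2 := ((hasDerivAt_pow 2 t).div_const 2).const_mul (Lc * ‖v‖ ^ 2)
    refine (h1.add h2).congr_deriv ?_
    ring
  have hub_int : IntervalIntegrable (fun t : ℝ => ⟪g' x, v⟫ + Lc * ‖v‖ ^ 2 * t)
      MeasureTheory.volume 0 1 := (by continuity : Continuous _).intervalIntegrable 0 1
  have hftc2 := intervalIntegral.integral_eq_sub_of_hasDerivAt hub hub_int
  have hmono : (∫ t in (0:ℝ)..1, ⟪g' (x + t • v), v⟫) ≤
      ∫ t in (0:ℝ)..1, (⟪g' x, v⟫ + Lc * ‖v‖ ^ 2 * t) := by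
    apply intervalIntegral.integral_mono_on zero_le_one hint hub_int
    intro t ht
    have hb : ⟪g' (x + t • v) - g' x, v⟫ ≤ ‖g' (x + t • v) - g' x‖ * ‖v‖ :=
      real_inner_le_norm _ _
    have hl : ‖g' (x + t • v) - g' x‖ ≤ Lc * (t * ‖v‖) := by
      have := hlip (x + t • v) x
      simpa [norm_smul, abs_of_nonneg ht.1] using this
    have hdiff : ⟪g' (x + t • v), v⟫ - ⟪g' x, v⟫ = ⟪g' (x + t • v) - g' x, v⟫ := by
      rw [inner_sub_left]
    nlinarith [mul_le_mul_of_nonneg_right hl (norm_nonneg v), norm_nonneg v,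
      mul_nonneg (mul_nonneg (norm_nonneg (g' (x + t • v) - g' x)) ht.1) (norm_nonneg v)]
  rw [hftc, hftc2] at hmono
  simp at hmono
  have hxy : x + v = y := by simp [hv]
  rw [hxy] at hmono
  have hnorm : ‖y - x‖ = ‖v‖ := by rw [hv]
  nlinarith [hmono]

lemma lower_bound_aux {g : E → ℝ} {c : ℝ} (hconv : ConvexOn ℝ Set.univ g)
    {w : E} (hw : IsMinOn (fun x => g x + c / 2 * ‖x‖ ^ 2) Set.univ w) (x : E) :
    c / 2 * ‖x - w‖ ^ 2 ≤ (g x + c / 2 * ‖x‖ ^ 2) - (g w + c / 2 * ‖w‖ ^ 2) := by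
  set A := g w + c / 2 * ‖w‖ ^ 2 with hA
  set B := g x + c / 2 * ‖x‖ ^ 2 with hB
  set D := c / 2 * ‖x - w‖ ^ 2 with hD
  have step : ∀ t ∈ Set.Ioo (0:ℝ) 1, (1 - t) * D ≤ B - A := by
    intro t ht
    obtain ⟨ht0, ht1⟩ := ht
    have hcomb := hconv.2 (Set.mem_univ w) (Set.mem_univ x)
      (show (0:ℝ) ≤ 1 - t by linarith) (le_of_lt ht0) (by ring)
    simp only [smul_eq_mul] at hcomb
    have hid : ‖(1-t) • w + t • x‖ ^ 2
        = (1-t) * ‖w‖ ^ 2 + t * ‖x‖ ^ 2 - t * (1-t) * ‖x - w‖ ^ 2 := by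
      have e1 := norm_add_sq_real ((1-t) • w) (t • x)
      have e2 := norm_sub_sq_real x w
      have e3 : ⟪(1-t) • w, t • x⟫ = (1-t) * t * ⟪w, x⟫ := by
        rw [real_inner_smul_left, real_inner_smul_right]; ring
      have e4 : ‖(1-t) • w‖ ^ 2 = (1-t)^2 * ‖w‖ ^ 2 := by
        rw [norm_smul]; rw [Real.norm_eq_abs]; rw [mul_pow, sq_abs]
      have e5 : ‖t • x‖ ^ 2 = t^2 * ‖x‖ ^ 2 := by
        rw [norm_smul]; rw [Real.norm_eq_abs]; rw [mul_pow, sq_abs]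
      have e6 : ⟪x, w⟫ = ⟪w, x⟫ := real_inner_comm w x
      nlinarith [e1, e2, e3, e4, e5, e6]
    have hmin := hw (Set.mem_univ ((1-t) • w + t • x))
    simp only [Set.mem_setOf_eq] at hmin
    have : A ≤ g ((1-t) • w + t • x) + c / 2 * ‖(1-t) • w + t • x‖ ^ 2 := hmin
    rw [hid] at this
    have key : A ≤ (1-t) * A + t * B - t * (1-t) * D := by
      rw [hA, hB, hD]; nlinarith [hcomb]
    have : t * ((1-t) * D) ≤ t * (B - A) := by nlinarith [key]
    exact le_of_mul_le_mul_left (by linarith [this]) ht0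
  have htend : Filter.Tendsto (fun t : ℝ => (1 - t) * D)
      (nhdsWithin 0 (Set.Ioi 0)) (nhds D) := by
    have hcont : Continuous fun t : ℝ => (1 - t) * D :=
      (continuous_const.sub continuous_id).mul continuous_const
    have := hcont.tendsto 0
    simpa using this.mono_left nhdsWithin_le_nhds
  refine le_of_tendsto htend ?_
  filter_upwards [Ioo_mem_nhdsGT_of_mem (Set.mem_Ico.2 ⟨le_refl (0:ℝ), one_pos⟩)] with t ht
  exact step t ht

lemma upper_bound_aux {g : E → ℝ} {g' : E → E} {Lc c : ℝ}
    (hgrad : ∀ x, HasGradientAt g (g' x) x)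
    (hlip : ∀ a b, ‖g' a - g' b‖ ≤ Lc * ‖a - b‖)
    {w : E} (hw : IsMinOn (fun x => g x + c / 2 * ‖x‖ ^ 2) Set.univ w) (y : E) :
    (g y + c / 2 * ‖y‖ ^ 2) - (g w + c / 2 * ‖w‖ ^ 2) ≤ (Lc + c) / 2 * ‖y - w‖ ^ 2 := by
  have hf : HasFDerivAt (fun x : E => g x + c / 2 * ‖x‖ ^ 2)
      (InnerProductSpace.toDual ℝ E (g' w + c • w)) w := by
    have h1 := hasGradientAt_iff_hasFDerivAt.1 (hgrad w)
    have h2 := hasGradientAt_iff_hasFDerivAt.1 (hasGradientAt_half_norm_sq_aux c w)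
    simpa [map_add, Pi.add_def] using h1.add h2
  have hmin : IsLocalMin (fun x : E => g x + c / 2 * ‖x‖ ^ 2) w :=
    hw.isLocalMin Filter.univ_mem
  have hzero := hmin.hasFDerivAt_eq_zero hf
  have hgw : g' w + c • w = 0 := by
    apply (InnerProductSpace.toDual ℝ E).injective
    rw [hzero, map_zero]
  have hdesc := descent_lemma_aux hgrad hlip w y
  have hq : c / 2 * ‖y‖ ^ 2
      = c / 2 * ‖w‖ ^ 2 + c * ⟪w, y - w⟫ + c / 2 * ‖y - w‖ ^ 2 := by
    have e1 := norm_add_sq_real w (y - w)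
    have e2 : w + (y - w) = y := by abel
    rw [e2] at e1
    rw [e1]; ring
  have hz : ⟪g' w, y - w⟫ + c * ⟪w, y - w⟫ = 0 := by
    have : ⟪g' w + c • w, y - w⟫ = 0 := by rw [hgw, inner_zero_left]
    rw [inner_add_left, real_inner_smul_left] at this
    linarith [this]
  nlinarith [hdesc, hq, hz]

end Aux

/-- Matrix–vector multiplication landing in Euclidean space. -/
noncomputable def mulVecE {k q : ℕ} (U : Matrix (Fin k) (Fin q) ℝ)
    (x : EuclideanSpace ℝ (Fin q)) : EuclideanSpace ℝ (Fin k) :=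
  WithLp.toLp 2 (fun i => ∑ j, U i j * x j)

/-- Proposition F.4 (deterministic version): if `U_t` is an `ε`-minimizer of the expected
self-tuning objective `F`, then the expected weighted squared distance of `U_t e(λ)` to the
per-λ optima `w(λ)` is bounded via any comparison matrix `U_app`. -/
theorem hyper_batch_approx_guarantee {k q : ℕ} {Λ : Type*} [MeasurableSpace Λ]
    (Q : Measure Λ) [IsProbabilityMeasure Q]
    (g : Λ → EuclideanSpace ℝ (Fin k) → ℝ)
    (g' : Λ → EuclideanSpace ℝ (Fin k) → EuclideanSpace ℝ (Fin k))
    (L lam0 : Λ → ℝ) (w : Λ → EuclideanSpace ℝ (Fin k))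
    (e : Λ → EuclideanSpace ℝ (Fin q))
    (Ustar Ut Uapp : Matrix (Fin k) (Fin q) ℝ) (ε : ℝ) (hε : 0 ≤ ε)
    (hconv : ∀ l, ConvexOn ℝ Set.univ (g l))
    (hgrad : ∀ l x, HasGradientAt (g l) (g' l x) x)
    (hlip : ∀ l x y, ‖g' l x - g' l y‖ ≤ L l * ‖x - y‖)
    (hlam : ∀ l, 0 < lam0 l)
    (hw : ∀ l, IsMinOn (fun x => g l x + lam0 l / 2 * ‖x‖ ^ 2) Set.univ (w l))
    (hintt : Integrable (fun l => g l (mulVecE Ut (e l)) + lam0 l / 2 * ‖mulVecE Ut (e l)‖ ^ 2) Q)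
    (hintstar : Integrable
      (fun l => g l (mulVecE Ustar (e l)) + lam0 l / 2 * ‖mulVecE Ustar (e l)‖ ^ 2) Q)
    (hintapp : Integrable
      (fun l => g l (mulVecE Uapp (e l)) + lam0 l / 2 * ‖mulVecE Uapp (e l)‖ ^ 2) Q)
    (hintw : Integrable (fun l => g l (w l) + lam0 l / 2 * ‖w l‖ ^ 2) Q)
    (hintq : Integrable (fun l => lam0 l * ‖mulVecE Ut (e l) - w l‖ ^ 2) Q)
    (hintq' : Integrable (fun l => (L l + lam0 l) * ‖mulVecE Uapp (e l) - w l‖ ^ 2) Q)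
    (hstar : ∀ U : Matrix (Fin k) (Fin q) ℝ,
      (∫ l, (g l (mulVecE Ustar (e l)) + lam0 l / 2 * ‖mulVecE Ustar (e l)‖ ^ 2) ∂Q) ≤
        ∫ l, (g l (mulVecE U (e l)) + lam0 l / 2 * ‖mulVecE U (e l)‖ ^ 2) ∂Q)
    (ht : (∫ l, (g l (mulVecE Ut (e l)) + lam0 l / 2 * ‖mulVecE Ut (e l)‖ ^ 2) ∂Q) ≤
        (∫ l, (g l (mulVecE Ustar (e l)) + lam0 l / 2 * ‖mulVecE Ustar (e l)‖ ^ 2) ∂Q) + ε) :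
    (∫ l, lam0 l * ‖mulVecE Ut (e l) - w l‖ ^ 2 ∂Q) ≤
      (∫ l, (L l + lam0 l) * ‖mulVecE Uapp (e l) - w l‖ ^ 2 ∂Q) + 2 * ε := by
  -- pointwise bounds
  have hlow : ∀ l, lam0 l * ‖mulVecE Ut (e l) - w l‖ ^ 2 ≤
      2 * ((g l (mulVecE Ut (e l)) + lam0 l / 2 * ‖mulVecE Ut (e l)‖ ^ 2) -
        (g l (w l) + lam0 l / 2 * ‖w l‖ ^ 2)) := by
    intro l
    have := lower_bound_aux (hconv l) (hw l) (mulVecE Ut (e l))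
    linarith [this]
  have hup : ∀ l, 2 * ((g l (mulVecE Uapp (e l)) + lam0 l / 2 * ‖mulVecE Uapp (e l)‖ ^ 2) -
      (g l (w l) + lam0 l / 2 * ‖w l‖ ^ 2)) ≤
      (L l + lam0 l) * ‖mulVecE Uapp (e l) - w l‖ ^ 2 := by
    intro l
    have := upper_bound_aux (hgrad l) (hlip l) (hw l) (mulVecE Uapp (e l))
    linarith [this]
  have hint1 : Integrable (fun l =>
      2 * ((g l (mulVecE Ut (e l)) + lam0 l / 2 * ‖mulVecE Ut (e l)‖ ^ 2) -
        (g l (w l) + lam0 l / 2 * ‖w l‖ ^ 2))) Q := (hintt.sub hintw).const_mul 2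
  have hint2 : Integrable (fun l =>
      2 * ((g l (mulVecE Uapp (e l)) + lam0 l / 2 * ‖mulVecE Uapp (e l)‖ ^ 2) -
        (g l (w l) + lam0 l / 2 * ‖w l‖ ^ 2))) Q := (hintapp.sub hintw).const_mul 2
  have step1 := integral_mono hintq hint1 hlow
  have step2 := integral_mono hint2 hintq' hup
  rw [integral_const_mul, integral_sub hintt hintw] at step1
  rw [integral_const_mul, integral_sub hintapp hintw] at step2
  linarith [hstar Uapp, ht, step1, step2]
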